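/- arXiv:1605.02125 — 2 statements merged into one kernel-verified Lean document; each statement's English description precedes it below -/
import Mathlib

section
/- (Truncated Cotlar identity for prefix/suffix Hilbert transforms of depth d.) Fix an integer d ≥ 1. Let P be the coefficient projection of ℂ[F] onto the span of {λ_w : |w| ≤ 2d−2} and P⊥ := id − P. Given any complex numbers ε′_e and (ε′_h)_{h∈F, |h|=d}, define H^{Ld}_{ε′} λ_w := ε′_h λ_w if |w| ≥ d, where h is the unique length-d prefix of w, and := ε′_e λ_w if |w| < d. Given any complex numbers ε_e and (ε_h)_{|h|=d}, define H^{Rd}_ε λ_w := ε_h λ_w if |w| ≥ d, where h is the unique length-d suffix of w (the h with |h| = d and |w·h⁻¹| = |w| − d), and := ε_e λ_w if |w| < d. Then for all x, y ∈ ℂ[F]: P⊥[(H^{Ld}_{ε′} x)·(H^{Rd}_ε y)] = P⊥[ H^{Ld}_{ε′}(x·(H^{Rd}_ε y)) + H^{Rd}_ε((H^{Ld}_{ε′} x)·y) − H^{Ld}_{ε′}(H^{Rd}_ε(x·y)) ]. -/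
open scoped Classical

noncomputable section

abbrev F := FreeGroup ℕ
abbrev A := MonoidAlgebra ℂ F

def lam (w : F) : A := MonoidAlgebra.single w 1

def tau (x : A) : ℂ := x.coeff 1

def len (w : F) : ℕ := w.toWord.length

abbrev Letter := ℕ × Bool

def firstL (w : F) : Option Letter := w.toWord.head?
def lastL (w : F) : Option Letter := w.toWord.getLast?

def invLetter (s : Letter) : Letter := (s.1, !s.2)

/-- `g` is a prefix of `w` : `|g⁻¹w| = |w| - |g|`. -/
def isPrefix (g w : F) : Prop := len g + len (g⁻¹ * w) = len w

/-- the involution `x* (w) = conj (x (w⁻¹))`. -/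
def starA (x : A) : A :=
  MonoidAlgebra.ofCoeff (Finsupp.mapDomain (fun w : F => w⁻¹)
    (Finsupp.mapRange (fun c => (starRingEnd ℂ) c) (by simp) x.coeff))

def Ls (s : Letter) (x : A) : A := MonoidAlgebra.ofCoeff (Finsupp.filter (fun w => firstL w = some s) x.coeff)
def Rs (s : Letter) (x : A) : A := MonoidAlgebra.ofCoeff (Finsupp.filter (fun w => lastL w = some s) x.coeff)

def Lk (k : ℕ) (x : A) : A := Ls (k, true) x + Ls (k, false) x
def Rk (k : ℕ) (x : A) : A := Rs (k, true) x + Rs (k, false) x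

def Lh (h : F) (x : A) : A := MonoidAlgebra.ofCoeff (Finsupp.filter (fun w => isPrefix h w) x.coeff)

def Heps (εe : ℂ) (ε : ℕ → ℂ) (x : A) : A :=
  (εe * tau x) • lam 1 + ∑ᶠ k : ℕ, ε k • Lk k x

def HepsOp (εe : ℂ) (ε : ℕ → ℂ) (x : A) : A :=
  ((starRingEnd ℂ) εe * tau x) • lam 1 + ∑ᶠ k : ℕ, ((starRingEnd ℂ) (ε k)) • Rk k x

/-- noncommutative `L^{2^m}` norm. -/
def Lnorm (m : ℕ) (x : A) : ℝ :=
  (tau ((starA x * x) ^ (2 ^ (m - 1)))).re ^ ((1 : ℝ) / (2 ^ m : ℝ))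

/-- `(τ(y^{2^{m-1}}))^{1/2^m}` for positive `y`. -/
def Qnorm (m : ℕ) (y : A) : ℝ :=
  (tau (y ^ (2 ^ (m - 1)))).re ^ ((1 : ℝ) / (2 ^ m : ℝ))

def ddag (x y : A) : A :=
  Finsupp.sum x.coeff fun g cg => Finsupp.sum y.coeff fun h ch =>
    if ¬ isPrefix g⁻¹ h then (cg * ch) • lam (g * h) else 0

def dag (x y : A) : A :=
  Finsupp.sum x.coeff fun g cg => Finsupp.sum y.coeff fun h ch =>
    if isPrefix g⁻¹ h ∧ g⁻¹ ≠ h then (cg * ch) • lam (g * h) else 0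


/-- the length-`d` prefix of a word (meaningful when `d ≤ len w`). -/
def prefixWord (d : ℕ) (w : F) : F := FreeGroup.mk (w.toWord.take d)

/-- the length-`d` suffix of a word (meaningful when `d ≤ len w`). -/
def suffixWord (d : ℕ) (w : F) : F := FreeGroup.mk (w.toWord.drop (len w - d))

/-- `H^{Ld}_ε` : multiply `λ_w` by `ε_h` where `h` is the length-`d` prefix of `w`
(by `ε_e` if `|w| < d`). -/
def HLd (d : ℕ) (εe : ℂ) (ε : F → ℂ) (x : A) : A :=
  Finsupp.sum x.coeff fun w c =>
    ((if d ≤ len w then ε (prefixWord d w) else εe) * c) • lam w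

/-- `H^{Rd}_ε` : multiply `λ_w` by `ε_h` where `h` is the length-`d` suffix of `w`
(by `ε_e` if `|w| < d`). -/
def HRd (d : ℕ) (εe : ℂ) (ε : F → ℂ) (x : A) : A :=
  Finsupp.sum x.coeff fun w c =>
    ((if d ≤ len w then ε (suffixWord d w) else εe) * c) • lam w

/-- the projection `P⊥` killing all words of length `≤ 2d-2`. -/
def Pperp (d : ℕ) (x : A) : A := MonoidAlgebra.ofCoeff (Finsupp.filter (fun w => ¬ (len w ≤ 2 * d - 2)) x.coeff)

section WordLemmas

abbrev Ltr := ℕ × Bool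
def Rnc (a b : Ltr) : Prop := ¬(a.1 = b.1 ∧ a.2 = !b.2)

lemma chain_reduce {L : List Ltr} (h : List.Chain' Rnc L) : FreeGroup.reduce L = L := by
  induction L with
  | nil => rfl
  | cons a L ih =>
    rw [FreeGroup.reduce.cons, ih h.tail]
    cases L with
    | nil => rfl
    | cons b tl =>
      have : Rnc a b := (List.isChain_cons_cons.mp h).1
      simp only [Rnc] at this
      simp [this]

lemma reduce_chain (L : List Ltr) : List.Chain' Rnc (FreeGroup.reduce L) := by
  induction L with
  | nil => exact List.isChain_nil
  | cons a L ih =>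
    rw [FreeGroup.reduce.cons]
    cases hL : FreeGroup.reduce L with
    | nil => exact List.isChain_singleton _
    | cons b tl =>
      rw [hL] at ih
      by_cases hc : a.1 = b.1 ∧ a.2 = !b.2
      · simp only [hc, if_true]; exact ih.tail
      · simp only [hc, if_false]
        exact List.isChain_cons_cons.mpr ⟨hc, ih⟩

lemma struct (L1 : List Ltr) : ∀ L2 : List Ltr, List.Chain' Rnc L1 → List.Chain' Rnc L2 →
    ∃ t, t ≤ L1.length ∧ t ≤ L2.length ∧
      FreeGroup.reduce (L1 ++ L2) = L1.take (L1.length - t) ++ L2.drop t := by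
  induction L1 using List.reverseRecOn with
  | nil => intro L2 _ h2; exact ⟨0, by simp, by simp, by simpa using chain_reduce h2⟩
  | append_singleton M a ih =>
    intro L2 h1 h2
    cases L2 with
    | nil =>
      refine ⟨0, by simp, by simp, ?_⟩
      simp only [Nat.sub_zero, List.take_length, List.drop_zero, List.append_nil]
      exact chain_reduce h1
    | cons b N =>
      by_cases hc : a.1 = b.1 ∧ a.2 = !b.2
      · have hstep : FreeGroup.Red.Step ((M ++ [a]) ++ (b :: N)) (M ++ N) := by
          have : (M ++ [a]) ++ (b :: N) = M ++ (b.1, !b.2) :: (b.1, b.2) :: N := by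
            have : a = (b.1, !b.2) := Prod.ext hc.1 hc.2
            simp [this]
          rw [this]
          exact FreeGroup.Red.Step.not_rev
        obtain ⟨t, ht1, ht2, heq⟩ := ih N (h1.prefix (by simp)) (h2.suffix (by simp))
        refine ⟨t + 1, by simp; omega, by simp; omega, ?_⟩
        rw [FreeGroup.reduce.Step.eq hstep, heq]
        have h3 : (M ++ [a]).length - (t + 1) = M.length - t := by simp
        rw [h3, List.take_append_of_le_length (by omega)]
        simp
      · refine ⟨0, by simp, by simp, ?_⟩
        simp only [Nat.sub_zero, List.take_length, List.drop_zero]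
        apply chain_reduce
        refine List.isChain_append.mpr ?_
        exact ⟨h1, h2, by simpa [Rnc] using hc⟩

lemma toWord_chain (g : F) : List.Chain' Rnc g.toWord := by
  have := reduce_chain g.toWord
  rwa [FreeGroup.reduce_toWord] at this

lemma struct_group (g h : F) : ∃ t, t ≤ len g ∧ t ≤ len h ∧
    (g * h).toWord = g.toWord.take (len g - t) ++ h.toWord.drop t := by
  obtain ⟨t, h1, h2, heq⟩ := struct g.toWord h.toWord (toWord_chain g) (toWord_chain h)
  refine ⟨t, h1, h2, ?_⟩
  have : g * h = FreeGroup.mk (g.toWord ++ h.toWord) := by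
    rw [← FreeGroup.mul_mk, FreeGroup.mk_toWord, FreeGroup.mk_toWord]
  rw [this, FreeGroup.toWord_mk, heq]; rfl

lemma key_lemma (d : ℕ) (g h : F) (hlen : 2 * d - 1 ≤ len (g * h)) (hd : 1 ≤ d) :
    (d ≤ len g ∧ prefixWord d g = prefixWord d (g * h)) ∨
    (d ≤ len h ∧ suffixWord d h = suffixWord d (g * h)) := by
  obtain ⟨t, h1, h2, heq⟩ := struct_group g h
  have hlg : len g = g.toWord.length := rfl
  have hlh : len h = h.toWord.length := rfl
  have hlgh : len (g * h) = (len g - t) + (len h - t) := by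
    rw [len, heq]
    simp
    omega
  rcases le_or_gt d (len g - t) with hcase | hcase
  · left
    refine ⟨by omega, ?_⟩
    rw [prefixWord, prefixWord, heq, List.take_append_of_le_length (by simp; omega),
      List.take_take, min_eq_left (by omega)]
  · right
    have hdh : d ≤ len h - t := by omega
    refine ⟨by omega, ?_⟩
    have hA : (g.toWord.take (len g - t)).length = len g - t := by simp; omega
    have hdrop : List.drop (len g - t + (len h - t) - d)
        (List.take (len g - t) g.toWord ++ List.drop t h.toWord)
        = List.drop (len h - d) h.toWord := by
      rw [List.drop_append, hA,
        List.drop_eq_nil_of_le (le_of_eq_of_le hA (by omega)),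
        List.nil_append, List.drop_drop]
      congr 1
      omega
    rw [suffixWord, suffixWord, heq, hlgh, hdrop]

end WordLemmas

section AlgebraLemmas

def mLc (d : ℕ) (εe : ℂ) (ε : F → ℂ) (w : F) : ℂ :=
  if d ≤ len w then ε (prefixWord d w) else εe
def mRc (d : ℕ) (εe : ℂ) (ε : F → ℂ) (w : F) : ℂ :=
  if d ≤ len w then ε (suffixWord d w) else εe

lemma HLd_single (d : ℕ) (εe : ℂ) (ε : F → ℂ) (w : F) (c : ℂ) :
    HLd d εe ε (MonoidAlgebra.single w c) = MonoidAlgebra.single w (mLc d εe ε w * c) := by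
  rw [HLd, MonoidAlgebra.coeff_single, Finsupp.sum_single_index (by simp)]
  show _ • (MonoidAlgebra.single w (1:ℂ)) = _
  rw [MonoidAlgebra.smul_single, smul_eq_mul, mul_one, mLc]

lemma HRd_single (d : ℕ) (εe : ℂ) (ε : F → ℂ) (w : F) (c : ℂ) :
    HRd d εe ε (MonoidAlgebra.single w c) = MonoidAlgebra.single w (mRc d εe ε w * c) := by
  rw [HRd, MonoidAlgebra.coeff_single, Finsupp.sum_single_index (by simp)]
  show _ • (MonoidAlgebra.single w (1:ℂ)) = _
  rw [MonoidAlgebra.smul_single, smul_eq_mul, mul_one, mRc]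

lemma HLd_zero (d : ℕ) (εe : ℂ) (ε : F → ℂ) : HLd d εe ε 0 = 0 := by
  rw [HLd, MonoidAlgebra.coeff_zero]; exact Finsupp.sum_zero_index

lemma HRd_zero (d : ℕ) (εe : ℂ) (ε : F → ℂ) : HRd d εe ε 0 = 0 := by
  rw [HRd, MonoidAlgebra.coeff_zero]; exact Finsupp.sum_zero_index

lemma HLd_add (d : ℕ) (εe : ℂ) (ε : F → ℂ) (x x' : A) :
    HLd d εe ε (x + x') = HLd d εe ε x + HLd d εe ε x' := by
  rw [HLd, HLd, HLd, MonoidAlgebra.coeff_add]; exact Finsupp.sum_add_index' (by simp) (by intro a b₁ b₂; rw [mul_add, add_smul])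

lemma HRd_add (d : ℕ) (εe : ℂ) (ε : F → ℂ) (x x' : A) :
    HRd d εe ε (x + x') = HRd d εe ε x + HRd d εe ε x' := by
  rw [HRd, HRd, HRd, MonoidAlgebra.coeff_add]; exact Finsupp.sum_add_index' (by simp) (by intro a b₁ b₂; rw [mul_add, add_smul])

lemma Pperp_apply (d : ℕ) (x : A) (w : F) :
    (Pperp d x).coeff w = if ¬ (len w ≤ 2 * d - 2) then x.coeff w else 0 :=
  Finsupp.filter_apply _ _ _

lemma Pperp_zero (d : ℕ) : Pperp d (0 : A) = 0 := by
  ext w; rw [Pperp_apply]; split <;> simp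

lemma Pperp_add (d : ℕ) (x y : A) : Pperp d (x + y) = Pperp d x + Pperp d y :=
  congrArg MonoidAlgebra.ofCoeff Finsupp.filter_add

lemma Pperp_sub (d : ℕ) (x y : A) : Pperp d (x - y) = Pperp d x - Pperp d y := by
  ext w
  rw [Pperp_apply, MonoidAlgebra.coeff_sub, MonoidAlgebra.coeff_sub, Finsupp.sub_apply, Finsupp.sub_apply, Pperp_apply, Pperp_apply]
  split <;> simp

end AlgebraLemmas
section MoreLemmas

lemma Pperp_single (d : ℕ) (w : F) (c : ℂ) :
    Pperp d (MonoidAlgebra.single w c : A)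
      = if ¬ (len w ≤ 2 * d - 2) then MonoidAlgebra.single w c else (0 : A) := by
  rw [Pperp]
  split_ifs with h
  · exact congrArg MonoidAlgebra.ofCoeff <| Finsupp.filter_single_of_neg (fun u => ¬ (len u ≤ 2 * d - 2)) (not_not_intro h)
  · exact congrArg MonoidAlgebra.ofCoeff <| Finsupp.filter_single_of_pos (fun u => ¬ (len u ≤ 2 * d - 2)) h

lemma cotlar_single (d : ℕ) (hd : 1 ≤ d) (εe' εe : ℂ) (ε' ε : F → ℂ) (g h : F) (a b : ℂ)
    (x y : A) (hx : x = MonoidAlgebra.single g a) (hy : y = MonoidAlgebra.single h b) :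
    Pperp d (HLd d εe' ε' x * HRd d εe ε y)
      = Pperp d (HLd d εe' ε' (x * HRd d εe ε y)
          + HRd d εe ε (HLd d εe' ε' x * y)
          - HLd d εe' ε' (HRd d εe ε (x * y))) := by
  subst hx hy
  simp only [HRd_single, HLd_single, MonoidAlgebra.single_mul_single]
  simp only [HRd_single, HLd_single, Pperp_sub, Pperp_add, Pperp_single]
  by_cases hw : len (g * h) ≤ 2 * d - 2
  · simp [hw]
  · simp only [hw, not_false_eq_true, if_true]
    have hdle : d ≤ len (g * h) := by omega
    rcases key_lemma d g h (by omega) hd with ⟨hdg, hpre⟩ | ⟨hdh, hsuf⟩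
    · have hm : mLc d εe' ε' g = mLc d εe' ε' (g * h) := by
        rw [mLc, mLc, if_pos hdg, if_pos hdle, hpre]
      rw [hm, ← MonoidAlgebra.single_add, ← MonoidAlgebra.single_sub]
      congr 1
      ring
    · have hm : mRc d εe ε h = mRc d εe ε (g * h) := by
        rw [mRc, mRc, if_pos hdh, if_pos hdle, hsuf]
      rw [hm, ← MonoidAlgebra.single_add, ← MonoidAlgebra.single_sub]
      congr 1
      ring

lemma A_induction {p : A → Prop} (x : A) (h0 : p 0)
    (hadd : ∀ f g : A, p f → p g → p (f + g))
    (hsingle : ∀ (w : F) (c : ℂ), p (MonoidAlgebra.single w c)) : p x :=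
  MonoidAlgebra.induction_linear x h0 hadd hsingle

end MoreLemmas

/-- truncated Cotlar identity for prefix/suffix Hilbert transforms of
depth `d`. -/
theorem truncated_cotlar (d : ℕ) (hd : 1 ≤ d) (εe' εe : ℂ) (ε' ε : F → ℂ) (x y : A) :
    Pperp d (HLd d εe' ε' x * HRd d εe ε y)
      = Pperp d (HLd d εe' ε' (x * HRd d εe ε y)
          + HRd d εe ε (HLd d εe' ε' x * y)
          - HLd d εe' ε' (HRd d εe ε (x * y))) := by
  induction x using A_induction with
  | h0 => simp [HLd_zero, HRd_zero, Pperp_zero]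
  | hadd f g hf hg =>
    simp only [HLd_add, add_mul, HRd_add, Pperp_add, Pperp_sub] at hf hg ⊢
    rw [hf, hg]
    abel
  | hsingle g a =>
    induction y using A_induction with
    | h0 => simp [HLd_zero, HRd_zero, Pperp_zero]
    | hadd f' g' hf hg =>
      simp only [HRd_add, mul_add, HLd_add, Pperp_add, Pperp_sub] at hf hg ⊢
      rw [hf, hg]
      abel
    | hsingle h b => exact cotlar_single d hd εe' εe ε' ε g h a b _ _ rfl rfl
end
end

section
/- Let (w_k)_{k≥0} be a geodesic path in F starting at the identity: w₀ = e, |w_k| = k and w_k < w_{k+1} for all k ≥ 0. For x ∈ ℂ[F] set T x := Σ_k x̂(w_k) λ_{w_k} (a finite sum). Then for all x ∈ ℂ[F]: (T x)*·(T x) = (Σ_k |x̂(w_k)|²)·λ_e + x* † (T x) + (x* † (T x))*. -/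
open scoped Classical

noncomputable section

lemma isPrefix_iff {g h : F} : isPrefix g h ↔ g.toWord <+: h.toWord := by
  constructor
  · intro hp
    have hh : h = FreeGroup.mk (g.toWord ++ (g⁻¹ * h).toWord) := by
      rw [← FreeGroup.mul_mk, FreeGroup.mk_toWord, FreeGroup.mk_toWord, mul_inv_cancel_left]
    have h1 : h.toWord = FreeGroup.reduce (g.toWord ++ (g⁻¹ * h).toWord) := by
      conv_lhs => rw [hh]
      exact FreeGroup.toWord_mk
    have hsub : List.Sublist (FreeGroup.reduce (g.toWord ++ (g⁻¹ * h).toWord)) (g.toWord ++ (g⁻¹ * h).toWord) :=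
      (FreeGroup.reduce.red).sublist
    have hlen : (FreeGroup.reduce (g.toWord ++ (g⁻¹ * h).toWord)).length
        = (g.toWord ++ (g⁻¹ * h).toWord).length := by
      rw [← h1, List.length_append]
      exact hp.symm
    have := hsub.eq_of_length hlen
    rw [h1, this]
    exact ⟨_, rfl⟩
  · rintro ⟨t, ht⟩
    have hred : FreeGroup.reduce (g.toWord ++ t) = g.toWord ++ t := by
      rw [ht]; exact FreeGroup.reduce_toWord h
    have hr : FreeGroup.Red (g.toWord ++ t) (g.toWord ++ FreeGroup.reduce t) :=
      FreeGroup.Red.append_append FreeGroup.Red.refl FreeGroup.reduce.red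
    have hmin : FreeGroup.reduce (g.toWord ++ t) = g.toWord ++ FreeGroup.reduce t :=
      FreeGroup.reduce.min (by rw [hred]; exact hr)
    rw [hred] at hmin
    have htred : FreeGroup.reduce t = t := (List.append_cancel_left hmin).symm
    have hinv : g⁻¹ * h = FreeGroup.mk t := by
      have : g * FreeGroup.mk t = h := by
        rw [← FreeGroup.mk_toWord (x := g), FreeGroup.mul_mk, ht, FreeGroup.mk_toWord]
      rw [← this, inv_mul_cancel_left]
    unfold isPrefix len
    rw [hinv, FreeGroup.toWord_mk, htred, ← List.length_append, ht]

lemma isPrefix_refl (g : F) : isPrefix g g := by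
  unfold isPrefix
  simp [len, FreeGroup.toWord_one]

lemma isPrefix.trans {a b c : F} (h1 : isPrefix a b) (h2 : isPrefix b c) : isPrefix a c :=
  isPrefix_iff.2 ((isPrefix_iff.1 h1).trans (isPrefix_iff.1 h2))

lemma isPrefix.len_le {g h : F} (hp : isPrefix g h) : len g ≤ len h := by
  unfold isPrefix at hp; omega

lemma isPrefix.eq_of_len {g h : F} (hp : isPrefix g h) (hl : len g = len h) : g = h := by
  have h0 : len (g⁻¹ * h) = 0 := by unfold isPrefix at hp; omega
  have : g⁻¹ * h = 1 := by
    have := List.length_eq_zero_iff.1 h0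
    rw [FreeGroup.toWord_eq_nil_iff] at this
    exact this
  have := congrArg (g * ·) this
  simpa using this.symm

section
variable (w : ℕ → F) (hwlen : ∀ k : ℕ, len (w k) = k)
    (hwchain : ∀ k : ℕ, isPrefix (w k) (w (k + 1)) ∧ w k ≠ w (k + 1))

include hwchain in
lemma chain_prefix : ∀ {j k : ℕ}, j ≤ k → isPrefix (w j) (w k) := by
  intro j k h
  induction k, h using Nat.le_induction with
  | base => exact isPrefix_refl _
  | succ n hn ih => exact ih.trans (hwchain n).1

include hwlen in
lemma w_inj : Function.Injective w := by
  intro a b h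
  have := hwlen a; rw [h, hwlen b] at this; omega

include hwlen hwchain in
lemma prefix_unique {g : F} {k : ℕ} (hp : isPrefix g (w k)) : g = w (len g) := by
  have hle : len g ≤ k := by have := hp.len_le; rwa [hwlen] at this
  have h2 : isPrefix (w (len g)) (w k) := chain_prefix w hwchain hle
  have e1 := List.prefix_iff_eq_take.1 (isPrefix_iff.1 hp)
  have e2 := List.prefix_iff_eq_take.1 (isPrefix_iff.1 h2)
  have hlw : (FreeGroup.toWord (w (len g))).length = (FreeGroup.toWord g).length := by
    have := hwlen (len g); unfold len at this ⊢; omega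
  rw [hlw] at e2
  apply FreeGroup.toWord_injective
  rw [e1, e2]

include hwlen hwchain in
lemma prefix_chain_iff {j k : ℕ} :
    (isPrefix (w j) (w k) ∧ w j ≠ w k) ↔ j < k := by
  constructor
  · rintro ⟨hp, hne⟩
    have := hp.len_le
    rw [hwlen, hwlen] at this
    rcases lt_or_eq_of_le this with h | h
    · exact h
    · exact absurd (congrArg w h) hne
  · intro h
    refine ⟨chain_prefix w hwchain h.le, fun he => ?_⟩
    have := w_inj w hwlen he; omega
end

lemma lam_mul (g h : F) : lam g * lam h = lam (g * h) := by
  unfold lam; rw [MonoidAlgebra.single_mul_single, one_mul]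

lemma smul_lam (c : ℂ) (g : F) : c • lam g = MonoidAlgebra.single g c := by
  unfold lam; rw [MonoidAlgebra.smul_single', mul_one]

lemma starA_apply (x : A) (g : F) : (starA x).coeff g = (starRingEnd ℂ) (x.coeff g⁻¹) := by
  unfold starA
  rw [MonoidAlgebra.coeff_ofCoeff]
  conv_lhs => rw [show g = (g⁻¹)⁻¹ by simp]
  rw [Finsupp.mapDomain_apply (fun a b h => by simpa using h : Function.Injective (fun w : F => w⁻¹))]
  simp

lemma starA_single (g : F) (c : ℂ) :
    starA (MonoidAlgebra.single g c) = MonoidAlgebra.single g⁻¹ ((starRingEnd ℂ) c) := by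
  unfold starA
  rw [MonoidAlgebra.coeff_single,
    Finsupp.mapRange_single, Finsupp.mapDomain_single, MonoidAlgebra.ofCoeff_single]

lemma starA_add (x y : A) : starA (x + y) = starA x + starA y := by
  unfold starA
  rw [MonoidAlgebra.coeff_add, Finsupp.mapRange_add (by intros; simp [map_add]), Finsupp.mapDomain_add, MonoidAlgebra.ofCoeff_add]

lemma starA_zero : starA 0 = 0 := by
  unfold starA; simp

lemma starA_sum {ι : Type*} (s : Finset ι) (f : ι → A) :
    starA (∑ i ∈ s, f i) = ∑ i ∈ s, starA (f i) := by
  classical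
  induction s using Finset.induction with
  | empty => simpa using starA_zero
  | insert _ _ h ih => rw [Finset.sum_insert h, Finset.sum_insert h, starA_add, ih]

lemma starA_smul_lam (c : ℂ) (g : F) :
    starA (c • lam g) = (starRingEnd ℂ) c • lam g⁻¹ := by
  rw [smul_lam, starA_single, smul_lam]

lemma dag_eq (x y : A) (s t : Finset F) (hs : x.coeff.support ⊆ s) (ht : y.coeff.support ⊆ t) :
    dag x y = ∑ g ∈ s, ∑ h ∈ t,
      if isPrefix g⁻¹ h ∧ g⁻¹ ≠ h then (x.coeff g * y.coeff h) • lam (g * h) else 0 := by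
  unfold dag
  rw [Finsupp.sum_of_support_subset x.coeff hs _ (fun g _ => by simp)]
  refine Finset.sum_congr rfl fun g _ => ?_
  rw [Finsupp.sum_of_support_subset y.coeff ht _ (fun h _ => by simp)]


/-- for a geodesic path `(w_k)` starting at the identity and
`T x = Σ_k x̂(w_k) λ_{w_k}`, one has
`(Tx)*(Tx) = (Σ_k |x̂(w_k)|²) λ_e + x* † (Tx) + (x* † (Tx))*`. -/
theorem geodesic_projection_square (w : ℕ → F)
    (hw0 : w 0 = 1) (hwlen : ∀ k : ℕ, len (w k) = k)
    (hwchain : ∀ k : ℕ, isPrefix (w k) (w (k + 1)) ∧ w k ≠ w (k + 1)) (x : A) :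
    starA (∑ᶠ k : ℕ, x.coeff (w k) • lam (w k)) * (∑ᶠ k : ℕ, x.coeff (w k) • lam (w k))
      = (∑ᶠ k : ℕ, (Complex.normSq (x.coeff (w k)) : ℂ)) • lam 1
        + dag (starA x) (∑ᶠ k : ℕ, x.coeff (w k) • lam (w k))
        + starA (dag (starA x) (∑ᶠ k : ℕ, x.coeff (w k) • lam (w k))) := by
  classical
  have hwinj : Function.Injective w := w_inj w hwlen
  set K : Finset ℕ := x.coeff.support.preimage w hwinj.injOn with hKdef
  have hK : ∀ j, j ∈ K ↔ x.coeff (w j) ≠ 0 := fun j => by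
    simp [hKdef, Finset.mem_preimage, Finsupp.mem_support_iff]
  set T : A := ∑ k ∈ K, x.coeff (w k) • lam (w k) with hTdef
  have hT : (∑ᶠ k : ℕ, x.coeff (w k) • lam (w k)) = T := by
    apply finsum_eq_sum_of_support_subset
    intro k hk
    rw [Function.mem_support] at hk
    rw [Finset.mem_coe, hK]
    intro h0; rw [h0, zero_smul] at hk; exact hk rfl
  have hD : (∑ᶠ k : ℕ, (Complex.normSq (x.coeff (w k)) : ℂ)) = ∑ k ∈ K, (Complex.normSq (x.coeff (w k)) : ℂ) := by
    apply finsum_eq_sum_of_support_subset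
    intro k hk
    rw [Function.mem_support] at hk
    rw [Finset.mem_coe, hK]
    intro h0; rw [h0] at hk; simp at hk
  rw [hT, hD]
  -- notation for the generic term
  set t : ℕ → ℕ → A := fun j k => ((starRingEnd ℂ) (x.coeff (w j)) * x.coeff (w k)) • lam ((w j)⁻¹ * w k)
    with htdef
  -- LHS
  have hstarT : starA T = ∑ j ∈ K, (starRingEnd ℂ) (x.coeff (w j)) • lam ((w j)⁻¹) := by
    rw [hTdef, starA_sum]
    exact Finset.sum_congr rfl fun j _ => starA_smul_lam _ _
  have hLHS : starA T * T = ∑ j ∈ K, ∑ k ∈ K, t j k := by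
    rw [hstarT, hTdef, Finset.sum_mul_sum]
    refine Finset.sum_congr rfl fun j _ => Finset.sum_congr rfl fun k _ => ?_
    rw [smul_mul_assoc, mul_smul_comm, smul_smul, lam_mul, htdef]
  -- support facts
  have hTapply : ∀ k, T.coeff (w k) = if k ∈ K then x.coeff (w k) else 0 := by
    intro m
    rw [hTdef]
    rw [MonoidAlgebra.coeff_sum, Finset.sum_apply']
    have h1 : ∀ k, (x.coeff (w k) • lam (w k)).coeff (w m) = if k = m then x.coeff (w k) else 0 := by
      intro k
      rw [smul_lam, MonoidAlgebra.coeff_single,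
        Finsupp.single_apply]
      exact if_congr ⟨fun h => hwinj h, fun h => congrArg w h⟩ rfl rfl
    rw [Finset.sum_congr rfl fun k _ => h1 k]
    rw [Finset.sum_ite_eq' K m (fun k => x.coeff (w k))]
  have hTsupp : T.coeff.support ⊆ K.image w := by
    intro a ha
    rw [Finsupp.mem_support_iff] at ha
    by_contra hna
    apply ha
    rw [hTdef, MonoidAlgebra.coeff_sum, Finset.sum_apply']
    apply Finset.sum_eq_zero
    intro k hk
    rw [smul_lam, MonoidAlgebra.coeff_single,
      Finsupp.single_apply, if_neg]
    intro he
    exact hna (Finset.mem_image.2 ⟨k, hk, he⟩)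
  have hSsupp : (starA x).coeff.support ⊆ x.coeff.support.image (fun a => a⁻¹) := by
    intro g hg
    rw [Finsupp.mem_support_iff, starA_apply] at hg
    have : x.coeff g⁻¹ ≠ 0 := fun h => hg (by rw [h]; simp)
    exact Finset.mem_image.2 ⟨g⁻¹, Finsupp.mem_support_iff.2 this, by simp⟩
  -- dag computation
  have hdag : dag (starA x) T = ∑ j ∈ K, ∑ k ∈ K, if j < k then t j k else 0 := by
    rw [dag_eq (starA x) T (x.coeff.support.image (fun a => a⁻¹)) (K.image w) hSsupp hTsupp]
    rw [Finset.sum_image (g := fun a => a⁻¹) (fun a _ b _ h => by simpa using h)]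
    have step1 : ∀ a ∈ x.coeff.support,
        (∑ h ∈ K.image w, if isPrefix (a⁻¹)⁻¹ h ∧ (a⁻¹)⁻¹ ≠ h then ((starA x).coeff a⁻¹ * T.coeff h) • lam (a⁻¹ * h) else 0)
        = ∑ k ∈ K, if isPrefix a (w k) ∧ a ≠ w k then ((starRingEnd ℂ) (x.coeff a) * x.coeff (w k)) • lam (a⁻¹ * w k) else 0 := by
      intro a _
      rw [Finset.sum_image (fun j _ k _ h => hwinj h)]
      refine Finset.sum_congr rfl fun k hk => ?_
      rw [inv_inv, starA_apply, inv_inv, hTapply, if_pos hk]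
    rw [Finset.sum_congr rfl step1]
    have himg : K.image w ⊆ x.coeff.support := by
      intro a ha
      rcases Finset.mem_image.1 ha with ⟨j, hj, rfl⟩
      exact Finsupp.mem_support_iff.2 ((hK j).1 hj)
    rw [← Finset.sum_subset himg]
    · rw [Finset.sum_image (fun j _ k _ h => hwinj h)]
      refine Finset.sum_congr rfl fun j hj => Finset.sum_congr rfl fun k hk => ?_
      rw [htdef]
      congr 1
      simp only [eq_iff_iff]
      exact prefix_chain_iff w hwlen hwchain
    · intro a ha hna
      apply Finset.sum_eq_zero
      intro k hk
      rw [if_neg]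
      rintro ⟨hp, hne⟩
      apply hna
      have hau := prefix_unique w hwlen hwchain hp
      refine Finset.mem_image.2 ⟨len a, ?_, hau.symm⟩
      rw [hK, ← hau]
      exact Finsupp.mem_support_iff.1 ha
  rw [hLHS, hdag]
  -- star of the dag sum
  have hst : ∀ j k, starA (t j k) = t k j := by
    intro j k
    rw [htdef]
    simp only
    rw [starA_smul_lam, mul_inv_rev, inv_inv, map_mul, Complex.conj_conj, mul_comm]
  have hstardag : starA (∑ j ∈ K, ∑ k ∈ K, if j < k then t j k else 0)
      = ∑ j ∈ K, ∑ k ∈ K, if k < j then t j k else 0 := by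
    rw [starA_sum]
    simp only [starA_sum, apply_ite starA, starA_zero, hst]
    rw [Finset.sum_comm]
  rw [hstardag]
  -- diagonal
  have hdiag : (∑ k ∈ K, (Complex.normSq (x.coeff (w k)) : ℂ)) • lam 1
      = ∑ j ∈ K, ∑ k ∈ K, if j = k then t j k else 0 := by
    rw [Finset.sum_smul]
    refine Finset.sum_congr rfl fun j hj => ?_
    rw [Finset.sum_ite_eq K j (fun k => t j k)]
    rw [if_pos hj, htdef]
    simp only
    rw [inv_mul_cancel, Complex.normSq_eq_conj_mul_self]
  rw [hdiag]
  -- trichotomy assembly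
  rw [← Finset.sum_add_distrib, ← Finset.sum_add_distrib]
  refine Finset.sum_congr rfl fun j _ => ?_
  rw [← Finset.sum_add_distrib, ← Finset.sum_add_distrib]
  refine Finset.sum_congr rfl fun k _ => ?_
  rcases lt_trichotomy j k with h | h | h
  · rw [if_pos h, if_neg h.ne, if_neg (not_lt_of_gt h), zero_add, add_zero]
  · rw [if_pos h, if_neg h.not_gt, if_neg (h ▸ lt_irrefl j), add_zero, add_zero, h]
  · rw [if_pos h, if_neg h.ne', if_neg (not_lt_of_gt h), zero_add, zero_add]
end
end
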